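/- Let Γ be a group and j : Γ → G₀ a homomorphism such that the action of Γ on ℍ² via j is properly discontinuous. Let u : Γ → ℝ³ be a j-cocycle and let X be a (j,u)-equivariant vector field on ℍ² that is k-lipschitz for some k < 0. Then: (i) for every v ∈ ℝ³ there is a unique point ϖ(v) ∈ ℍ² such that v ∧ ϖ(v) = X(ϖ(v)); (ii) the map ϖ : ℝ³ → ℍ² is continuous and surjective; (iii) ϖ(j(γ)·v + u(γ)) = j(γ)·ϖ(v) for all γ ∈ Γ and v ∈ ℝ³; (iv) the affine action of Γ on ℝ³ defined by (j,u) is properly discontinuous. (Thus the fibers ϖ⁻¹(p) = {v : v ∧ p = X(p)}, which are timelike affine lines, form an equivariant fibration of Minkowski space over ℍ².) -/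

import Mathlib

noncomputable section

/-- Minkowski space `ℝ^{2,1}` as `Fin 3 → ℝ`. -/
abbrev V : Type := Fin 3 → ℝ

/-- The Minkowski form `⟨x|y⟩ = x₁y₁ + x₂y₂ − x₃y₃`. -/
def mink (x y : V) : ℝ := x 0 * y 0 + x 1 * y 1 - x 2 * y 2

/-- The Minkowski cross product. -/
def mcross (x y : V) : V :=
  ![x 1 * y 2 - x 2 * y 1, x 2 * y 0 - x 0 * y 2, -(x 0 * y 1) + x 1 * y 0]

/-- The hyperbolic plane: upper sheet of the hyperboloid. -/
def H2 : Set V := {p | mink p p = -1 ∧ 0 < p 2}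

/-- Inverse hyperbolic cosine. -/
def acosh (x : ℝ) : ℝ := Real.log (x + Real.sqrt (x ^ 2 - 1))

/-- Hyperbolic distance. -/
def hdist (p q : V) : ℝ := acosh (-(mink p q))

/-- Norm of a (spacelike) tangent vector. -/
def mnorm (x : V) : ℝ := Real.sqrt (mink x x)

/-- The point `exp_p(t x)`. -/
def mexp (p x : V) (t : ℝ) : V :=
  if x = 0 then p
  else Real.cosh (t * mnorm x) • p + (Real.sinh (t * mnorm x) / mnorm x) • x

/-- `d'(x_p, x_q)`: the derivative at `t = 0` of `t ↦ d(exp_p(t x_p), exp_q(t x_q))`. -/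
def dprime (p xp q xq : V) : ℝ :=
  deriv (fun t => hdist (mexp p xp t) (mexp q xq t)) 0

/-- A convex field on `ℍ²`. -/
def IsConvexField (X : Set (V × V)) : Prop :=
  IsClosed X ∧ (∀ px ∈ X, px.1 ∈ H2 ∧ mink px.2 px.1 = 0) ∧
    ∀ p : V, Convex ℝ {x : V | (p, x) ∈ X}

/-- The fiber `X(p)` of a convex field. -/
def fiberAt (X : Set (V × V)) (p : V) : Set V := {x | (p, x) ∈ X}

/-- A convex field is defined over `A` if all fibers over `A` are nonempty. -/
def DefinedOver (X : Set (V × V)) (A : Set V) : Prop := ∀ p ∈ A, (fiberAt X p).Nonempty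

/-- A convex field is `k`-lipschitz. -/
def LipschitzField (k : ℝ) (X : Set (V × V)) : Prop :=
  ∀ p xp q xq, (p, xp) ∈ X → (q, xq) ∈ X → p ≠ q → dprime p xp q xq ≤ k * hdist p q

/-- A (continuous) vector field on `ℍ²`. -/
def IsVectorField (X : V → V) : Prop := ContinuousOn X H2 ∧ ∀ p ∈ H2, mink (X p) p = 0

/-- A vector field is `k`-lipschitz. -/
def LipschitzVF (k : ℝ) (X : V → V) : Prop :=
  ∀ p ∈ H2, ∀ q ∈ H2, p ≠ q → dprime p (X p) q (X q) ≤ k * hdist p q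

/-- Hyperbolic convexity of a subset of `ℍ²`. -/
def HConvex (C : Set V) : Prop :=
  ∀ p ∈ C, ∀ q ∈ C, ∀ m ∈ H2, hdist p m + hdist m q = hdist p q → m ∈ C

/-- Hyperbolic convex hull. -/
def hconvexHull (A : Set V) : Set V := ⋂₀ {C : Set V | A ⊆ C ∧ C ⊆ H2 ∧ HConvex C}

/-- Interior of a subset of `ℍ²` relative to `ℍ²`. -/
def relInterior (A : Set V) : Set V :=
  {p | p ∈ H2 ∧ ∃ O : Set V, IsOpen O ∧ p ∈ O ∧ O ∩ H2 ⊆ A}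

/-- Linear automorphisms of `ℝ³`, a group under composition. -/
abbrev GL3 : Type := V ≃ₗ[ℝ] V

/-- Membership in `G₀`: preserves the Minkowski form, determinant one, preserves `ℍ²`. -/
def InG0 (g : GL3) : Prop :=
  (∀ x y : V, mink (g x) (g y) = mink x y) ∧
    LinearMap.det g.toLinearMap = 1 ∧ ∀ p ∈ H2, g p ∈ H2

/-- Properly discontinuous action on (a subset of) a topological space. -/
def ProperlyDiscOn {Γ α : Type*} [TopologicalSpace α] (act : Γ → α → α) (S : Set α) : Prop :=
  ∀ K L : Set α, K ⊆ S → L ⊆ S → IsCompact K → IsCompact L →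
    {γ : Γ | (act γ '' K ∩ L).Nonempty}.Finite

/-- A `j`-cocycle. -/
def IsCocycle {Γ : Type*} [Group Γ] (j : Γ →* GL3) (u : Γ → V) : Prop :=
  ∀ γ₁ γ₂ : Γ, u (γ₁ * γ₂) = u γ₁ + j γ₁ (u γ₂)

/-- Convex cocompact homomorphism. -/
def ConvexCocompact {Γ : Type*} [Group Γ] (j : Γ →* GL3) : Prop :=
  Function.Injective j ∧
    ProperlyDiscOn (fun (γ : Γ) (p : V) => j γ p) H2 ∧
    ∃ C K : Set V, C.Nonempty ∧ IsClosed C ∧ C ⊆ H2 ∧ HConvex C ∧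
      (∀ γ : Γ, j γ '' C = C) ∧ IsCompact K ∧ C ⊆ ⋃ γ : Γ, j γ '' K

/-- The convex core of `j`. -/
def ConvexCore {Γ : Type*} [Group Γ] (j : Γ →* GL3) : Set V :=
  ⋂₀ {C : Set V | C.Nonempty ∧ IsClosed C ∧ C ⊆ H2 ∧ HConvex C ∧ ∀ γ : Γ, j γ '' C = C}

/-- `(j,u)`-equivariance of a convex field. -/
def EquivField {Γ : Type*} [Group Γ] (j : Γ →* GL3) (u : Γ → V) (X : Set (V × V)) : Prop :=
  ∀ (γ : Γ), ∀ p ∈ H2,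
    fiberAt X (j γ p) = (fun x => j γ x + mcross (u γ) (j γ p)) '' fiberAt X p

/-- `(j,u)`-equivariance of a vector field. -/
def EquivVF {Γ : Type*} [Group Γ] (j : Γ →* GL3) (u : Γ → V) (X : V → V) : Prop :=
  ∀ (γ : Γ), ∀ p ∈ H2, X (j γ p) = j γ (X p) + mcross (u γ) (j γ p)

/-- Translation length `λ(g) = inf_{p ∈ ℍ²} d(p, g·p)`. -/
def transLength (g : V → V) : ℝ := sInf ((fun p => hdist p (g p)) '' H2)

/-- A transformation is hyperbolic if its translation length is positive. -/
def IsHyperbolic (g : V → V) : Prop := 0 < transLength g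

/-- `cross(v)` as a linear map `w ↦ v ∧ w`. -/
def crossLM (v : V) : V →ₗ[ℝ] V where
  toFun w := mcross v w
  map_add' w₁ w₂ := by
    funext i
    fin_cases i <;>
      simp [mcross, Pi.add_apply] <;> ring
  map_smul' c w := by
    funext i
    fin_cases i <;>
      simp [mcross, Pi.smul_apply, smul_eq_mul] <;> ring

/-- `cross(v)` as a continuous linear map. -/
def crossCLM (v : V) : V →L[ℝ] V := LinearMap.toContinuousLinearMap (crossLM v)

/-- A geodesic line of `ℍ²`. -/
def IsGeodesicLine (ℓ : Set V) : Prop :=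
  ∃ a ∈ H2, ∃ b ∈ H2, a ≠ b ∧ ℓ = {m ∈ H2 | mink m (mcross a b) = 0}

/-- A `j(Γ)`-invariant geodesic lamination in the convex core. -/
def IsLamination {Γ : Type*} [Group Γ] (j : Γ →* GL3) (L : Set (Set V)) : Prop :=
  L.Nonempty ∧
  (∀ ℓ ∈ L, IsGeodesicLine ℓ ∧ ℓ ⊆ ConvexCore j) ∧
  (∀ ℓ₁ ∈ L, ∀ ℓ₂ ∈ L, ℓ₁ ≠ ℓ₂ → ℓ₁ ∩ ℓ₂ = ∅) ∧
  IsClosed (⋃₀ L) ∧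
  ∀ (γ : Γ), ∀ ℓ ∈ L, j γ '' ℓ ∈ L

/-- The geodesic flow on the tangent bundle. -/
def gflow (t : ℝ) (px : V × V) : V × V :=
  if px.2 = 0 then px
  else (mexp px.1 px.2 t,
    (mnorm px.2 * Real.sinh (t * mnorm px.2)) • px.1 + Real.cosh (t * mnorm px.2) • px.2)

/-- Parallel transport from `p` to `q` along the geodesic. -/
def ptransport (p q x : V) : V := x + (mink x q / (1 - mink p q)) • (p + q)




section Aux
open Metric Complex Filter

lemma mink_comm (x y : V) : mink x y = mink y x := by unfold mink; ring

lemma H2_sq {p : V} (hp : p ∈ H2) : p 2 ^ 2 = 1 + p 0 ^ 2 + p 1 ^ 2 := by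
  have h := hp.1; unfold mink at h; nlinarith [h]

lemma H2_pos {p : V} (hp : p ∈ H2) : 0 < p 2 := hp.2

lemma H2_ge_one {p : V} (hp : p ∈ H2) : 1 ≤ p 2 := by
  nlinarith [H2_sq hp, H2_pos hp, sq_nonneg (p 0), sq_nonneg (p 1)]

lemma eq_of_coords {p q : V} (hp : p ∈ H2) (hq : q ∈ H2) (h0 : p 0 = q 0) (h1 : p 1 = q 1) :
    p = q := by
  have hsq : p 2 ^ 2 = q 2 ^ 2 := by rw [H2_sq hp, H2_sq hq, h0, h1]
  have h2 : p 2 = q 2 :=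
    le_antisymm (by nlinarith [hsq, add_pos (H2_pos hp) (H2_pos hq)])
      (by nlinarith [hsq, add_pos (H2_pos hp) (H2_pos hq)])
  funext i; fin_cases i <;> assumption

lemma tangent_spacelike {p x : V} (hp : p ∈ H2) (hx : mink x p = 0) : 0 ≤ mink x x := by
  have hs := H2_sq hp; have h2 := H2_pos hp
  unfold mink at hx ⊢
  have hx2 : x 2 * p 2 = x 0 * p 0 + x 1 * p 1 := by linarith
  have key : (x 2) ^ 2 * (p 2) ^ 2 = (x 0 * p 0 + x 1 * p 1) ^ 2 := by
    rw [← hx2]; ring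
  nlinarith [key, hs, sq_nonneg (x 0 * p 1 - x 1 * p 0), sq_nonneg (x 0), sq_nonneg (x 1),
    mul_pos h2 h2]

lemma tangent_spacelike_pos {p x : V} (hp : p ∈ H2) (hx : mink x p = 0) (hne : x ≠ 0) :
    0 < mink x x := by
  have hs := H2_sq hp; have h2 := H2_pos hp
  have h01 : x 0 ^ 2 + x 1 ^ 2 > 0 := by
    rcases lt_or_eq_of_le (by positivity : (0:ℝ) ≤ x 0 ^ 2 + x 1 ^ 2) with h | h
    · exact h
    · exfalso
      have hx0 : x 0 = 0 := by nlinarith [sq_nonneg (x 0), sq_nonneg (x 1)]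
      have hx1 : x 1 = 0 := by nlinarith [sq_nonneg (x 0), sq_nonneg (x 1)]
      have hx2 : x 2 = 0 := by
        unfold mink at hx; rw [hx0, hx1] at hx
        have : x 2 * p 2 = 0 := by linarith
        rcases mul_eq_zero.1 this with h | h
        · exact h
        · linarith
      exact hne (funext fun i => by fin_cases i <;> assumption)
  unfold mink at hx ⊢
  have hx2 : x 2 * p 2 = x 0 * p 0 + x 1 * p 1 := by linarith
  have key : (x 2) ^ 2 * (p 2) ^ 2 = (x 0 * p 0 + x 1 * p 1) ^ 2 := by
    rw [← hx2]; ring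
  nlinarith [key, hs, sq_nonneg (x 0 * p 1 - x 1 * p 0), mul_pos h2 h2]

lemma mink_lt_neg_one {p q : V} (hp : p ∈ H2) (hq : q ∈ H2) (hne : p ≠ q) :
    mink p q < -1 := by
  have hsp := H2_sq hp; have hsq := H2_sq hq
  have h2p := H2_pos hp; have h2q := H2_pos hq
  have hco : (p 0 - q 0) ^ 2 + (p 1 - q 1) ^ 2 > 0 := by
    rcases lt_or_eq_of_le (by positivity : (0:ℝ) ≤ (p 0 - q 0) ^ 2 + (p 1 - q 1) ^ 2) with h | h
    · exact h
    · exfalso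
      have h0 : p 0 = q 0 := by nlinarith [sq_nonneg (p 0 - q 0), sq_nonneg (p 1 - q 1)]
      have h1 : p 1 = q 1 := by nlinarith [sq_nonneg (p 0 - q 0), sq_nonneg (p 1 - q 1)]
      exact hne (eq_of_coords hp hq h0 h1)
  unfold mink
  nlinarith [sq_nonneg (p 0 * q 1 - p 1 * q 0), mul_pos h2p h2q,
    sq_nonneg (p 2 * q 2 + (1 + p 0 * q 0 + p 1 * q 1))]

lemma mink_le_neg_one {p q : V} (hp : p ∈ H2) (hq : q ∈ H2) : mink p q ≤ -1 := by
  rcases eq_or_ne p q with rfl | h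
  · exact le_of_eq hp.1
  · exact le_of_lt (mink_lt_neg_one hp hq h)

lemma tangent_CS {p x w : V} (hp : p ∈ H2) (hx : mink x p = 0) (hw : mink w p = 0) :
    (mink x w) ^ 2 ≤ mink x x * mink w w := by
  have key : ∀ t : ℝ, 0 ≤ mink w w * (t * t) + (2 * mink x w) * t + mink x x := by
    intro t
    have htan : mink (x + t • w) p = 0 := by
      unfold mink at hx hw ⊢
      simp only [Pi.add_apply, Pi.smul_apply, smul_eq_mul]
      linear_combination hx + t * hw
    have h := tangent_spacelike hp htan
    have expand : mink (x + t • w) (x + t • w)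
        = mink w w * (t * t) + (2 * mink x w) * t + mink x x := by
      unfold mink
      simp only [Pi.add_apply, Pi.smul_apply, smul_eq_mul]
      ring
    linarith [expand ▸ h]
  have h := discrim_le_zero key
  unfold discrim at h
  nlinarith [h]


lemma mexp_zero (p x : V) : mexp p x 0 = p := by
  unfold mexp
  split
  · rfl
  · funext i
    simp [Real.cosh_zero, Real.sinh_zero]

lemma hasDerivAt_mexp_coord {p x : V} (hp : p ∈ H2) (hx : mink x p = 0) (i : Fin 3) :
    HasDerivAt (fun t => mexp p x t i) (x i) 0 := by
  unfold mexp
  rcases eq_or_ne x 0 with rfl | hne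
  · simp only [if_pos rfl]
    simpa using (hasDerivAt_const (0:ℝ) (p i))
  · simp only [if_neg hne]
    have hxx : 0 < mink x x := tangent_spacelike_pos hp hx hne
    have hn : 0 < mnorm x := Real.sqrt_pos.2 hxx
    have h1 : HasDerivAt (fun t : ℝ => t * mnorm x) (mnorm x) 0 := by
      simpa using (hasDerivAt_id (0:ℝ)).mul_const (mnorm x)
    have hcosh : HasDerivAt (fun t : ℝ => Real.cosh (t * mnorm x) * p i)
        (0 * p i) 0 := by
      have := (h1.cosh).mul_const (p i)
      simpa [Real.sinh_zero] using this
    have hsinh : HasDerivAt (fun t : ℝ => Real.sinh (t * mnorm x) / mnorm x * x i)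
        (x i) 0 := by
      have := ((h1.sinh).div_const (mnorm x)).mul_const (x i)
      have h2 : Real.cosh (0 * mnorm x) * mnorm x / mnorm x * x i = x i := by
        rw [zero_mul, Real.cosh_zero, one_mul, div_self (ne_of_gt hn), one_mul]
      rw [h2] at this
      exact this
    have := hcosh.add hsinh
    exact this.congr_deriv (by ring)

lemma dprime_formula {p q xp xq : V} (hp : p ∈ H2) (hq : q ∈ H2) (hne : p ≠ q)
    (hxp : mink xp p = 0) (hxq : mink xq q = 0) :
    dprime p xp q xq
      = -(mink xp q + mink p xq) / Real.sqrt ((mink p q) ^ 2 - 1) := by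
  set y : ℝ := -(mink p q) with hy
  have hy1 : 1 < y := by have := mink_lt_neg_one hp hq hne; simp [hy]; linarith
  have hc : ∀ i, HasDerivAt (fun t => mexp p xp t i) (xp i) 0 := hasDerivAt_mexp_coord hp hxp
  have hd : ∀ i, HasDerivAt (fun t => mexp q xq t i) (xq i) 0 := hasDerivAt_mexp_coord hq hxq
  -- F t = -(mink (mexp p xp t) (mexp q xq t))
  have hF : HasDerivAt (fun t => -(mink (mexp p xp t) (mexp q xq t)))
      (-(mink xp q + mink p xq)) 0 := by
    have h0 := ((hc 0).mul (hd 0))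
    have h1 := ((hc 1).mul (hd 1))
    have h2 := ((hc 2).mul (hd 2))
    have := ((h0.add h1).sub h2).neg
    have heq : (fun t => -(mink (mexp p xp t) (mexp q xq t)))
        = fun t => -((fun t => mexp p xp t 0 * mexp q xq t 0) t
            + (fun t => mexp p xp t 1 * mexp q xq t 1) t
            - (fun t => mexp p xp t 2 * mexp q xq t 2) t) := by
      funext t; unfold mink; ring
    rw [heq]
    refine this.congr_deriv ?_
    have e1 : mexp p xp 0 = p := mexp_zero p xp
    have e2 : mexp q xq 0 = q := mexp_zero q xq
    rw [e1, e2]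
    unfold mink; ring
  have hF0 : -(mink (mexp p xp 0) (mexp q xq 0)) = y := by
    rw [mexp_zero, mexp_zero]
  set s : ℝ := Real.sqrt (y ^ 2 - 1) with hs
  have hspos : 0 < s := Real.sqrt_pos.2 (by nlinarith)
  have hs2 : s ^ 2 = y ^ 2 - 1 := Real.sq_sqrt (by nlinarith)
  -- inner: t ↦ F t ^ 2 - 1
  have hsq : HasDerivAt (fun t => (-(mink (mexp p xp t) (mexp q xq t))) ^ 2 - 1)
      (2 * y * (-(mink xp q + mink p xq))) 0 := by
    have := (hF.pow 2).sub_const 1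
    refine this.congr_deriv ?_
    rw [hF0]; ring
  have hsqrt : HasDerivAt (fun t => Real.sqrt ((-(mink (mexp p xp t) (mexp q xq t))) ^ 2 - 1))
      (2 * y * (-(mink xp q + mink p xq)) / (2 * s)) 0 := by
    have := hsq.sqrt (by rw [hF0]; nlinarith)
    convert this using 2
    rw [hF0]
  have hsum : HasDerivAt (fun t => -(mink (mexp p xp t) (mexp q xq t))
      + Real.sqrt ((-(mink (mexp p xp t) (mexp q xq t))) ^ 2 - 1))
      ((-(mink xp q + mink p xq)) + 2 * y * (-(mink xp q + mink p xq)) / (2 * s)) 0 :=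
    hF.add hsqrt
  have hval : -(mink (mexp p xp 0) (mexp q xq 0))
      + Real.sqrt ((-(mink (mexp p xp 0) (mexp q xq 0))) ^ 2 - 1) = y + s := by
    rw [hF0]
  have hpos : y + s > 0 := by linarith
  have hlog := hsum.log (by rw [hval]; linarith)
  have : dprime p xp q xq
      = ((-(mink xp q + mink p xq)) + 2 * y * (-(mink xp q + mink p xq)) / (2 * s)) / (y + s) := by
    unfold dprime hdist acosh
    rw [← hval]
    exact hlog.deriv
  rw [this]
  have hy2 : (mink p q) ^ 2 - 1 = y ^ 2 - 1 := by rw [hy]; ring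
  rw [hy2, ← hs]
  field_simp
  ring


lemma re_pos_of_close {u : ℂ} (h : ‖u - 1‖ < 1) : 0 < u.re := by
  have h2 : (u.re - 1) ^ 2 + u.im ^ 2 < 1 := by
    have := Complex.sq_norm (u - 1)
    have habs : ‖u - 1‖ ^ 2 < 1 := by nlinarith [norm_nonneg (u - 1)]
    rw [Complex.sq_norm, Complex.normSq_apply] at habs
    simp only [Complex.sub_re, Complex.sub_im, Complex.one_re, Complex.one_im, sub_zero] at habs
    nlinarith [habs]
  nlinarith [sq_nonneg u.im]

lemma exists_log_on_ball {r : ℝ} (hr : 0 < r) {g : ℂ → ℂ}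
    (hg : ContinuousOn g (closedBall 0 r)) (hnz : ∀ z ∈ closedBall 0 r, g z ≠ 0) :
    ∃ h : ℂ → ℂ, ContinuousOn h (closedBall 0 r) ∧
      ∀ z ∈ closedBall 0 r, Complex.exp (h z) = g z := by
  set B := closedBall (0:ℂ) r with hB
  have hBc : IsCompact B := isCompact_closedBall _ _
  have hBne : B.Nonempty := ⟨0, by simp [hB, le_of_lt hr]⟩
  -- minimum of ‖g‖
  obtain ⟨z₀, hz₀, hmin⟩ := hBc.exists_isMinOn hBne (hg.norm)
  set m : ℝ := ‖g z₀‖ with hm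
  have hmpos : 0 < m := by
    simp only [hm, norm_pos_iff]
    exact hnz z₀ hz₀
  have hmle : ∀ z ∈ B, m ≤ ‖g z‖ := fun z hz => hmin hz
  -- uniform continuity
  have huc := hBc.uniformContinuousOn_of_continuous hg
  rw [Metric.uniformContinuousOn_iff] at huc
  obtain ⟨δ, hδ, hucd⟩ := huc m hmpos
  -- choose n
  obtain ⟨n, hn⟩ : ∃ n : ℕ, 0 < n ∧ r / n < δ := by
    refine ⟨⌈r / δ⌉₊ + 1, Nat.succ_pos _, ?_⟩
    rw [div_lt_iff₀ (by positivity)]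
    have h1 : r / δ < (⌈r / δ⌉₊ + 1 : ℝ) := by
      calc r / δ ≤ ⌈r / δ⌉₊ := Nat.le_ceil _
      _ < (⌈r / δ⌉₊ + 1 : ℝ) := by norm_num
    calc r = (r / δ) * δ := by field_simp
    _ < (⌈r / δ⌉₊ + 1 : ℝ) * δ := by
        apply mul_lt_mul_of_pos_right h1 hδ
    _ = δ * ((⌈r / δ⌉₊ + 1 : ℕ) : ℝ) := by push_cast; ring
  obtain ⟨hnpos, hnδ⟩ := hn
  -- nodes
  set node : ℕ → ℂ → ℂ := fun j z => (((j : ℝ) / n : ℝ) : ℂ) * z with hnode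
  have hnodemem : ∀ j : ℕ, j ≤ n → ∀ z ∈ B, node j z ∈ B := by
    intro j hj z hz
    simp only [hB, mem_closedBall, dist_zero_right] at hz ⊢
    rw [hnode]
    simp only [norm_mul, Complex.norm_real]
    have h1 : ‖(j : ℝ) / n‖ ≤ 1 := by
      rw [Real.norm_eq_abs]
      rw [_root_.abs_of_nonneg (by positivity : (0:ℝ) ≤ (j:ℝ)/(n:ℝ))]
      rw [div_le_one (by exact_mod_cast hnpos)]
      exact_mod_cast hj
    calc ‖(j : ℝ) / n‖ * ‖z‖ ≤ 1 * ‖z‖ := by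
          apply mul_le_mul_of_nonneg_right h1 (norm_nonneg _)
    _ = ‖z‖ := one_mul _
    _ ≤ r := hz
  have hclose : ∀ j : ℕ, j < n → ∀ z ∈ B,
      ‖g (node (j+1) z) / g (node j z) - 1‖ < 1 := by
    intro j hj z hz
    have hj1 : node (j+1) z ∈ B := hnodemem (j+1) hj z hz
    have hj0 : node j z ∈ B := hnodemem j (le_of_lt hj) z hz
    have hgne : g (node j z) ≠ 0 := hnz _ hj0
    have hdist : dist (node (j+1) z) (node j z) < δ := by
      rw [hnode]
      simp only [dist_eq_norm]
      have : (((j+1 : ℕ) : ℝ) / n : ℝ) • z - (((j : ℕ) : ℝ) / n : ℝ) • z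
          = ((1 / n : ℝ) : ℂ) * z := by
        push_cast
        simp [smul_eq_mul]
        ring
      have heq : ((((j+1 : ℕ) : ℝ) / n : ℝ) : ℂ) * z - ((((j : ℕ) : ℝ) / n : ℝ) : ℂ) * z
          = ((1 / n : ℝ) : ℂ) * z := by
        push_cast
        ring
      rw [heq]
      simp only [norm_mul, Complex.norm_real, Real.norm_eq_abs]
      have hzr : ‖z‖ ≤ r := by simpa [hB, mem_closedBall, dist_zero_right] using hz
      have : |1 / (n:ℝ)| = 1 / n := abs_of_pos (by positivity)
      rw [this]
      calc 1 / (n:ℝ) * ‖z‖ ≤ 1 / n * r := by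
            apply mul_le_mul_of_nonneg_left hzr (by positivity)
      _ = r / n := by ring
      _ < δ := hnδ
    have hgg := hucd _ hj1 _ hj0 hdist
    rw [dist_eq_norm] at hgg
    have h1 : g (node (j+1) z) / g (node j z) - 1
        = (g (node (j+1) z) - g (node j z)) / g (node j z) := by
      field_simp
    rw [h1]
    rw [norm_div]
    rw [div_lt_one (by simpa using hgne : 0 < ‖g (node j z)‖)]
    calc ‖g (node (j+1) z) - g (node j z)‖ < m := hgg
    _ ≤ ‖g (node j z)‖ := hmle _ hj0
  -- define h
  set h : ℂ → ℂ := fun z => Complex.log (g 0)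
      + ∑ j ∈ Finset.range n, Complex.log (g (node (j+1) z) / g (node j z)) with hh
  have hnode0 : ∀ w : ℂ, node 0 w = 0 := by intro w; simp [hnode]
  refine ⟨h, ?_, ?_⟩
  · -- continuity
    rw [hh]
    apply ContinuousOn.add continuousOn_const
    apply continuousOn_finset_sum
    intro j hj
    rw [Finset.mem_range] at hj
    intro z hz
    have hj1 : node (j+1) z ∈ B := hnodemem (j+1) hj z hz
    have hj0 : node j z ∈ B := hnodemem j (le_of_lt hj) z hz
    have hcn : ∀ i : ℕ, i ≤ n → ContinuousWithinAt (fun w => g (node i w)) B z := by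
      intro i hi
      apply (hg.continuousWithinAt (hnodemem i hi z hz)).comp
      · exact (continuous_const.mul continuous_id).continuousWithinAt
      · intro w hw; exact hnodemem i hi w hw
    have hdiv : ContinuousWithinAt (fun w => g (node (j+1) w) / g (node j w)) B z :=
      (hcn (j+1) hj).div (hcn j (le_of_lt hj)) (hnz _ hj0)
    apply hdiv.clog
    left
    exact re_pos_of_close (hclose j hj z hz)
  · -- exp h = g
    intro z hz
    have key : ∀ j : ℕ, j ≤ n → Complex.exp (Complex.log (g 0)
        + ∑ i ∈ Finset.range j, Complex.log (g (node (i+1) z) / g (node i z)))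
        = g (node j z) := by
      intro j
      induction j with
      | zero =>
        intro _
        simp only [Finset.range_zero, Finset.sum_empty, add_zero, hnode0 z]
        exact Complex.exp_log (hnz 0 (by simp [hB, le_of_lt hr]))
      | succ i ih =>
        intro hi
        have hii : i ≤ n := le_of_lt (Nat.lt_of_succ_le hi)
        have hilt : i < n := Nat.lt_of_succ_le hi
        rw [Finset.sum_range_succ, ← add_assoc, Complex.exp_add, ih hii]
        rw [Complex.exp_log]
        · field_simp [hnz _ (hnodemem i hii z hz)]
        · apply div_ne_zero (hnz _ (hnodemem (i+1) hi z hz)) (hnz _ (hnodemem i hii z hz))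
    have hkey := key n (le_refl n)
    have hnn : node n z = z := by
      rw [hnode]
      have h1 : ((n : ℝ) / n : ℝ) = 1 := by
        field_simp
      simp [h1]
    rw [hnn] at hkey
    exact hkey


lemma int_cast_half_absurd (k m : ℤ) (h : (k : ℝ) = m + 1/2) : False := by
  have h2 : (2 * k : ℝ) = 2 * m + 1 := by linarith
  have : (2 * k : ℤ) = 2 * m + 1 := by exact_mod_cast h2
  omega

lemma int_valued_eq {f : ℝ → ℝ} (hf : Continuous f) (hint : ∀ θ : ℝ, ∃ k : ℤ, f θ = k)
    {a b : ℝ} (hab : a ≤ b) : f a = f b := by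
  by_contra hne
  obtain ⟨ka, hka⟩ := hint a
  obtain ⟨kb, hkb⟩ := hint b
  have hkne : ka ≠ kb := by
    intro h; apply hne; rw [hka, hkb, h]
  have hgap : 1 ≤ |f a - f b| := by
    rw [hka, hkb]
    have : 1 ≤ |ka - kb| := Int.one_le_abs (sub_ne_zero.2 hkne)
    have h2 : ((1:ℤ):ℝ) ≤ (|ka - kb| : ℤ) := by exact_mod_cast this
    push_cast at h2
    convert h2 using 2
  set t : ℝ := min (f a) (f b) + 1/2 with ht
  have htmem : t ∈ Set.uIcc (f a) (f b) := by
    rw [Set.uIcc_eq_union]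
    rcases le_total (f a) (f b) with h | h
    · left
      have habs : |f a - f b| = f b - f a := by rw [abs_sub_comm]; exact abs_of_nonneg (by linarith)
      rw [habs] at hgap
      constructor
      · rw [ht, min_eq_left h]; linarith
      · rw [ht, min_eq_left h]; linarith
    · right
      have habs : |f a - f b| = f a - f b := abs_of_nonneg (by linarith)
      rw [habs] at hgap
      constructor
      · rw [ht, min_eq_right h]; linarith
      · rw [ht, min_eq_right h]; linarith
  obtain ⟨θ, _, hθ⟩ := intermediate_value_uIcc hf.continuousOn htmem
  obtain ⟨k, hk⟩ := hint θ
  rw [hk] at hθ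
  rcases le_total (f a) (f b) with h | h
  · exact int_cast_half_absurd k ka (by rw [hθ, ht, min_eq_left h, hka])
  · exact int_cast_half_absurd k kb (by rw [hθ, ht, min_eq_right h, hkb])

lemma inward_zero {r : ℝ} (hr : 0 < r) {G : ℂ → ℂ}
    (hG : ContinuousOn G (closedBall 0 r))
    (hin : ∀ z : ℂ, ‖z‖ = r → (G z * (starRingEnd ℂ) z).re < 0) :
    ∃ z ∈ closedBall 0 r, G z = 0 := by
  by_contra hcon
  push_neg at hcon
  obtain ⟨h, hhc, hhe⟩ := exists_log_on_ball hr hG hcon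
  set zc : ℝ → ℂ := fun θ => (r : ℂ) * Complex.exp (θ * Complex.I) with hzc
  have hzcabs : ∀ θ, ‖zc θ‖ = r := by
    intro θ
    rw [hzc]
    simp [Complex.norm_exp_ofReal_mul_I, abs_of_pos hr]
  have hzcmem : ∀ θ, zc θ ∈ closedBall (0:ℂ) r := by
    intro θ
    simp [mem_closedBall, dist_zero_right, hzcabs θ, le_refl]
  have hzcne : ∀ θ, zc θ ≠ 0 := by
    intro θ hzero
    have := hzcabs θ
    rw [hzero] at this
    simp at this
    linarith
  set w : ℝ → ℂ := fun θ => G (zc θ) / (-(zc θ)) with hw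
  have hwre : ∀ θ, 0 < (w θ).re := by
    intro θ
    have hnsq : Complex.normSq (zc θ) = r ^ 2 := by
      rw [Complex.normSq_eq_norm_sq, hzcabs θ]
    have hre : (w θ).re = -((G (zc θ) * (starRingEnd ℂ) (zc θ)).re) / (r ^ 2) := by
      rw [hw]
      simp only [Complex.div_re, Complex.neg_re, Complex.neg_im, Complex.normSq_neg, hnsq,
        Complex.mul_re, Complex.conj_re, Complex.conj_im]
      ring
    rw [hre]
    apply div_pos _ (by positivity)
    linarith [hin (zc θ) (hzcabs θ)]
  have hwne : ∀ θ, w θ ≠ 0 := by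
    intro θ hzero
    have := hwre θ
    rw [hzero] at this
    simp at this
  set φ : ℝ → ℂ := fun θ => h (zc θ) - Complex.log (w θ) with hφ
  have hφexp : ∀ θ, Complex.exp (φ θ) = -(zc θ) := by
    intro θ
    rw [hφ]
    simp only
    rw [Complex.exp_sub, hhe _ (hzcmem θ), Complex.exp_log (hwne θ)]
    rw [hw]
    simp only
    rw [div_div_eq_mul_div, div_eq_iff (hcon _ (hzcmem θ))]
    ring
  set ψ : ℝ → ℂ := fun θ => φ θ - ((Real.log r : ℂ) + ((θ + Real.pi : ℝ) : ℂ) * Complex.I)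
    with hψ
  have hψexp : ∀ θ, Complex.exp (ψ θ) = 1 := by
    intro θ
    rw [hψ]
    simp only
    rw [Complex.exp_sub, hφexp θ]
    rw [div_eq_one_iff_eq (Complex.exp_ne_zero _)]
    push_cast
    rw [add_mul, Complex.exp_add, Complex.exp_add]
    rw [Complex.exp_pi_mul_I]
    rw [← Complex.ofReal_exp, Real.exp_log hr]
    rw [hzc]
    ring
  have hint : ∀ θ : ℝ, ∃ k : ℤ, (ψ θ).im = k * (2 * Real.pi) := by
    intro θ
    obtain ⟨k, hk⟩ := Complex.exp_eq_one_iff.1 (hψexp θ)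
    refine ⟨k, ?_⟩
    rw [hk]
    simp [Complex.mul_im]
  -- continuity of ψ.im
  have hzccont : Continuous zc := by
    rw [hzc]
    continuity
  have hφcont : Continuous φ := by
    rw [hφ]
    apply Continuous.sub
    · exact hhc.comp_continuous hzccont hzcmem
    · rw [continuous_iff_continuousAt]
      intro θ
      apply ContinuousAt.clog
      · apply ContinuousAt.div
        · exact (hG.comp_continuous hzccont hzcmem).continuousAt
        · exact (hzccont.neg).continuousAt
        · simpa using hzcne θ
      · left; exact hwre θ
  have hψcont : Continuous fun θ => (ψ θ).im := by
    rw [hψ]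
    apply Complex.continuous_im.comp
    apply hφcont.sub
    continuity
  -- the integer-valued function
  set mf : ℝ → ℝ := fun θ => (ψ θ).im / (2 * Real.pi) with hmf
  have hpi : (0:ℝ) < 2 * Real.pi := by positivity
  have hmfc : Continuous mf := hψcont.div_const _
  have hmfint : ∀ θ, ∃ k : ℤ, mf θ = k := by
    intro θ
    obtain ⟨k, hk⟩ := hint θ
    exact ⟨k, by rw [hmf]; simp only; rw [hk]; field_simp⟩
  have heq := int_valued_eq hmfc hmfint (le_of_lt (by positivity : (0:ℝ) < 2 * Real.pi))
  -- but mf (2π) = mf 0 - 1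
  have hzcper : zc (2 * Real.pi) = zc 0 := by
    rw [hzc]
    simp only
    push_cast
    rw [Complex.exp_two_pi_mul_I]
    simp
  have hφper : φ (2 * Real.pi) = φ 0 := by rw [hφ, hw]; simp only [hzcper]
  have him : (ψ (2 * Real.pi)).im = (ψ 0).im - 2 * Real.pi := by
    rw [hψ]
    simp only [hφper, Complex.sub_im, Complex.add_im, Complex.mul_im, Complex.I_re,
      Complex.I_im, Complex.ofReal_re, Complex.ofReal_im]
    ring
  have : mf (2 * Real.pi) = mf 0 - 1 := by
    rw [hmf]
    simp only
    rw [him]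
    field_simp
  rw [← heq] at this
  linarith


lemma mcross_apply0 (x y : V) : mcross x y 0 = x 1 * y 2 - x 2 * y 1 := rfl
lemma mcross_apply1 (x y : V) : mcross x y 1 = x 2 * y 0 - x 0 * y 2 := rfl
lemma mcross_apply2 (x y : V) : mcross x y 2 = -(x 0 * y 1) + x 1 * y 0 := rfl

lemma mink_cross_tangent (v p : V) : mink (mcross v p) p = 0 := by
  unfold mink
  rw [mcross_apply0, mcross_apply1, mcross_apply2]
  ring

lemma mink_cross_skew (v p q : V) : mink (mcross v p) q + mink p (mcross v q) = 0 := by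
  unfold mink
  rw [mcross_apply0, mcross_apply1, mcross_apply2,
    mcross_apply0, mcross_apply1, mcross_apply2]
  ring

lemma mink_sub_left (x y z : V) : mink (x - y) z = mink x z - mink y z := by
  unfold mink; simp only [Pi.sub_apply]; ring

lemma mcross_add_left (a b c : V) : mcross (a + b) c = mcross a c + mcross b c := by
  funext i
  fin_cases i <;>
    simp [mcross_apply0, mcross_apply1, mcross_apply2, Pi.add_apply] <;> ring

lemma mcross_double {p x : V} (hp : p ∈ H2) (hx : mink x p = 0) :
    mcross (mcross p x) p = x := by
  have hpp : p 0 * p 0 + p 1 * p 1 - p 2 * p 2 = -1 := hp.1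
  have htan : x 0 * p 0 + x 1 * p 1 - x 2 * p 2 = 0 := hx
  have h0 : mcross (mcross p x) p 0 = x 0 := by
    rw [mcross_apply0, mcross_apply1, mcross_apply2]
    linear_combination (-(x 0)) * hpp + p 0 * htan
  have h1 : mcross (mcross p x) p 1 = x 1 := by
    rw [mcross_apply1, mcross_apply2, mcross_apply0]
    linear_combination (-(x 1)) * hpp + p 1 * htan
  have h2 : mcross (mcross p x) p 2 = x 2 := by
    rw [mcross_apply2, mcross_apply0, mcross_apply1]
    linear_combination (-(x 2)) * hpp + p 2 * htan
  funext i
  fin_cases i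
  · exact h0
  · exact h1
  · exact h2

lemma mink_nondeg {a b : V} (h : ∀ z : V, mink a z = mink b z) : a = b := by
  have h0 := h ![1, 0, 0]
  have h1 := h ![0, 1, 0]
  have h2 := h ![0, 0, 1]
  unfold mink at h0 h1 h2
  simp at h0 h1 h2
  funext i
  fin_cases i <;> simpa using (by assumption : _)

lemma trip_eq_det (x y z : V) :
    mink (mcross x y) z = Matrix.det (Matrix.of ![x, y, z]) := by
  rw [Matrix.det_fin_three]
  unfold mink
  rw [mcross_apply0, mcross_apply1, mcross_apply2]
  simp only [Matrix.of_apply, Matrix.cons_val', Matrix.cons_val_zero, Matrix.empty_val',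
    Matrix.cons_val_fin_one, Matrix.cons_val_one, Matrix.head_cons, Matrix.head_fin_const,
    Matrix.cons_val_two, Matrix.tail_cons]
  ring

lemma g_cross {g : GL3} (hg : InG0 g) (x y : V) :
    mcross (g x) (g y) = g (mcross x y) := by
  set M : Matrix (Fin 3) (Fin 3) ℝ := LinearMap.toMatrix' g.toLinearMap with hM
  have hgx : ∀ w : V, g w = M.mulVec w := by
    intro w
    have h3 : M.mulVec w = g.toLinearMap w := by
      rw [← Matrix.toLin'_apply, hM, Matrix.toLin'_toMatrix']
    exact h3.symm
  have hdetM : M.det = 1 := by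
    rw [hM, LinearMap.det_toMatrix']
    exact hg.2.1
  have hrows : ∀ a b c : V,
      Matrix.of ![g a, g b, g c] = Matrix.of ![a, b, c] * M.transpose := by
    intro a b c
    ext i j
    fin_cases i <;>
      simp [Matrix.mul_apply, hgx, Matrix.mulVec, dotProduct, Fin.sum_univ_three,
        Matrix.transpose_apply, mul_comm]
  have htrip : ∀ a b c : V, mink (mcross (g a) (g b)) (g c) = mink (mcross a b) c := by
    intro a b c
    rw [trip_eq_det, trip_eq_det, hrows, Matrix.det_mul, Matrix.det_transpose, hdetM, mul_one]
  apply mink_nondeg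
  intro z
  have hsurj := g.surjective z
  obtain ⟨w, rfl⟩ := hsurj
  rw [htrip x y w, hg.1 (mcross x y) w]


def oH : V := ![0, 0, 1]

lemma oH_mem : oH ∈ H2 := by
  constructor
  · show mink oH oH = -1
    unfold mink oH
    simp
  · show (0:ℝ) < oH 2
    unfold oH
    simp

lemma mink_o (x : V) : mink x oH = -(x 2) := by
  unfold mink oH; simp

/-- bound `⟨x|p⟩ ≤ ‖x‖ sinh d(p,q)` for `x` tangent at `q`. -/
lemma tangent_bound {p q x : V} (hp : p ∈ H2) (hq : q ∈ H2) (hx : mink x q = 0) :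
    mink x p ≤ mnorm x * Real.sqrt ((mink p q) ^ 2 - 1) := by
  set e : ℝ := mink p q with he'
  have he : e = p 0 * q 0 + p 1 * q 1 - p 2 * q 2 := rfl
  set w : V := fun i => p i + e * q i with hw
  have hqq : q 0 * q 0 + q 1 * q 1 - q 2 * q 2 = -1 := hq.1
  have hpp : p 0 * p 0 + p 1 * p 1 - p 2 * p 2 = -1 := hp.1
  have hwq : mink w q = 0 := by
    unfold mink
    simp only [hw]
    linear_combination (-1 : ℝ) * he + e * hqq
  have hww : mink w w = e ^ 2 - 1 := by
    unfold mink
    simp only [hw]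
    linear_combination hpp - 2 * e * he + e ^ 2 * hqq
  have hxw : mink x w = mink x p := by
    unfold mink at hx ⊢
    simp only [hw]
    linear_combination e * hx
  have hCS := tangent_CS hq hx hwq
  rw [hxw, hww] at hCS
  have hxx : 0 ≤ mink x x := tangent_spacelike hq hx
  calc mink x p ≤ |mink x p| := le_abs_self _
  _ = Real.sqrt ((mink x p) ^ 2) := (Real.sqrt_sq_eq_abs _).symm
  _ ≤ Real.sqrt (mink x x * (e ^ 2 - 1)) := Real.sqrt_le_sqrt hCS
  _ = mnorm x * Real.sqrt (e ^ 2 - 1) := by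
      rw [Real.sqrt_mul hxx]; rfl

lemma acosh_ge_log {y : ℝ} (hy : 1 ≤ y) : Real.log y ≤ acosh y := by
  unfold acosh
  apply Real.log_le_log (by linarith)
  nlinarith [Real.sqrt_nonneg (y ^ 2 - 1)]

def chart (ζ : ℂ) : V := ![ζ.re, ζ.im, Real.sqrt (1 + ζ.re ^ 2 + ζ.im ^ 2)]

lemma chart_mem (ζ : ℂ) : chart ζ ∈ H2 := by
  have hpos : (0:ℝ) < 1 + ζ.re ^ 2 + ζ.im ^ 2 := by positivity
  have hs : Real.sqrt (1 + ζ.re ^ 2 + ζ.im ^ 2) ^ 2 = 1 + ζ.re ^ 2 + ζ.im ^ 2 :=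
    Real.sq_sqrt (le_of_lt hpos)
  constructor
  · show mink (chart ζ) (chart ζ) = -1
    unfold mink chart
    simp only [Matrix.cons_val_zero, Matrix.cons_val_one, Matrix.head_cons,
      Matrix.cons_val_two, Matrix.tail_cons]
    linear_combination (-1 : ℝ) * hs
  · show (0:ℝ) < chart ζ 2
    unfold chart
    simp only [Matrix.cons_val_two, Matrix.tail_cons, Matrix.head_cons]
    positivity

lemma chart_cont : Continuous chart := by
  apply continuous_pi
  intro i
  fin_cases i <;> unfold chart <;> simp <;> fun_prop

lemma exists_zero_of_monotone (Y : V → V) (hYc : ContinuousOn Y H2)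
    (hYt : ∀ p ∈ H2, mink (Y p) p = 0) (κ : ℝ) (hκ : 0 < κ)
    (hmono : ∀ p ∈ H2, ∀ q ∈ H2, p ≠ q →
      κ * hdist p q * Real.sqrt ((mink p q) ^ 2 - 1) ≤ mink (Y p) q + mink p (Y q)) :
    ∃ p ∈ H2, Y p = 0 := by
  set M : ℝ := mnorm (Y oH) with hM
  have hMnn : 0 ≤ M := Real.sqrt_nonneg _
  set D : ℝ := (M + 1) / κ with hD
  have hDpos : 0 < D := by positivity
  set ρ : ℝ := Real.exp D with hρ
  have hρpos : 0 < ρ := Real.exp_pos _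
  set G : ℂ → ℂ := fun ζ => (↑(Y (chart ζ) 0) : ℂ) + (↑(Y (chart ζ) 1) : ℂ) * Complex.I
    with hG
  have hYchart : Continuous fun ζ => Y (chart ζ) :=
    hYc.comp_continuous chart_cont (fun ζ => chart_mem ζ)
  have hGc : Continuous G := by
    rw [hG]
    apply Continuous.add
    · exact Complex.continuous_ofReal.comp ((continuous_apply (0 : Fin 3)).comp hYchart)
    · exact (Complex.continuous_ofReal.comp ((continuous_apply (1 : Fin 3)).comp hYchart)).mul
        continuous_const
  have hGre : ∀ ζ, (G ζ).re = Y (chart ζ) 0 := by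
    intro ζ; rw [hG]; simp
  have hGim : ∀ ζ, (G ζ).im = Y (chart ζ) 1 := by
    intro ζ; rw [hG]; simp
  -- inwardness
  have hinward : ∀ ζ : ℂ, ‖ζ‖ = ρ → (G ζ * (starRingEnd ℂ) ζ).re < 0 := by
    intro ζ hζ
    set p : V := chart ζ with hpdef
    have hp : p ∈ H2 := chart_mem ζ
    have habs2 : ζ.re ^ 2 + ζ.im ^ 2 = ρ ^ 2 := by
      have := Complex.sq_norm ζ
      rw [hζ] at this
      rw [this, Complex.normSq_apply]; ring
    have hpne : p ≠ oH := by
      intro h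
      have h0 : p 0 = 0 := by rw [h]; unfold oH; simp
      have h1 : p 1 = 0 := by rw [h]; unfold oH; simp
      have hre : ζ.re = 0 := by
        have : p 0 = ζ.re := by rw [hpdef]; unfold chart; simp
        rw [← this, h0]
      have him : ζ.im = 0 := by
        have : p 1 = ζ.im := by rw [hpdef]; unfold chart; simp
        rw [← this, h1]
      rw [hre, him] at habs2
      nlinarith
    -- mink p oH and s
    have hpo : mink p oH = -(p 2) := mink_o p
    have hy : -(mink p oH) = Real.sqrt (1 + ρ ^ 2) := by
      rw [hpo]
      have : p 2 = Real.sqrt (1 + ζ.re ^ 2 + ζ.im ^ 2) := by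
        rw [hpdef]; unfold chart; simp
      rw [this]
      norm_num
      congr 1
      linarith [habs2]
    have hs : Real.sqrt ((mink p oH) ^ 2 - 1) = ρ := by
      have h1 : (mink p oH) ^ 2 = 1 + ρ ^ 2 := by
        have : (mink p oH) ^ 2 = (-(mink p oH)) ^ 2 := by ring
        rw [this, hy, Real.sq_sqrt (by positivity)]
      rw [h1]
      norm_num
      exact Real.sqrt_sq (le_of_lt hρpos)
    -- distance lower bound
    have hdistD : D ≤ hdist p oH := by
      have hyge : ρ ≤ -(mink p oH) := by
        rw [hy]
        calc ρ = Real.sqrt (ρ ^ 2) := (Real.sqrt_sq (le_of_lt hρpos)).symm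
        _ ≤ Real.sqrt (1 + ρ ^ 2) := Real.sqrt_le_sqrt (by linarith)
      calc D = Real.log ρ := by rw [hρ, Real.log_exp]
      _ ≤ Real.log (-(mink p oH)) := Real.log_le_log hρpos hyge
      _ ≤ acosh (-(mink p oH)) := acosh_ge_log (by
          have := mink_lt_neg_one hp oH_mem hpne; linarith)
      _ = hdist p oH := rfl
    -- monotonicity
    have hmm := hmono p hp oH oH_mem hpne
    have hbound : mink p (Y oH) ≤ M * ρ := by
      rw [mink_comm]
      have := tangent_bound hp oH_mem (hYt oH oH_mem)
      rw [hs] at this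
      exact this
    have hYpo : ρ ≤ mink (Y p) oH := by
      have h1 : κ * hdist p oH * ρ ≤ mink (Y p) oH + mink p (Y oH) := by
        rw [← hs]; exact hmm
      have h2 : (M + 1) * ρ ≤ κ * hdist p oH * ρ := by
        apply mul_le_mul_of_nonneg_right _ (le_of_lt hρpos)
        calc (M + 1) = κ * D := by rw [hD]; field_simp
        _ ≤ κ * hdist p oH := by
            apply mul_le_mul_of_nonneg_left hdistD (le_of_lt hκ)
      nlinarith
    -- conclude
    have hY2 : Y p 2 ≤ -ρ := by
      have := hYpo
      rw [mink_o] at this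
      linarith
    have htan := hYt p hp
    unfold mink at htan
    have hp2pos : 0 < p 2 := hp.2
    have hre : (G ζ * (starRingEnd ℂ) ζ).re = Y p 0 * ζ.re + Y p 1 * ζ.im := by
      rw [Complex.mul_re]
      simp only [Complex.conj_re, Complex.conj_im, hGre, hGim, hpdef]
      ring
    rw [hre]
    have hcoords : Y p 0 * ζ.re + Y p 1 * ζ.im = Y p 2 * p 2 := by
      have h0 : p 0 = ζ.re := by rw [hpdef]; unfold chart; simp
      have h1 : p 1 = ζ.im := by rw [hpdef]; unfold chart; simp
      rw [← h0, ← h1]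
      linarith [htan]
    rw [hcoords]
    nlinarith [hY2, hρpos, hp2pos]
  obtain ⟨z₀, hz₀, hGz₀⟩ := inward_zero hρpos hGc.continuousOn hinward
  refine ⟨chart z₀, chart_mem z₀, ?_⟩
  have h0 : Y (chart z₀) 0 = 0 := by
    have := congrArg Complex.re hGz₀
    rw [hGre] at this
    simpa using this
  have h1 : Y (chart z₀) 1 = 0 := by
    have := congrArg Complex.im hGz₀
    rw [hGim] at this
    simpa using this
  have htan := hYt (chart z₀) (chart_mem z₀)
  unfold mink at htan
  rw [h0, h1] at htan
  have h2 : Y (chart z₀) 2 = 0 := by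
    have hp2 : 0 < chart z₀ 2 := (chart_mem z₀).2
    rcases mul_eq_zero.1 (by linarith : Y (chart z₀) 2 * chart z₀ 2 = 0) with h | h
    · exact h
    · linarith
  funext i
  fin_cases i <;> simp [h0, h1, h2]


end Aux

section MainAux
open Metric Complex Filter

lemma mink_zero_left (z : V) : mink 0 z = 0 := by
  unfold mink; simp

lemma hdist_pos {p q : V} (hp : p ∈ H2) (hq : q ∈ H2) (hne : p ≠ q) : 0 < hdist p q := by
  unfold hdist acosh
  have hy : 1 < -(mink p q) := by linarith [mink_lt_neg_one hp hq hne]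
  apply Real.log_pos
  nlinarith [Real.sqrt_nonneg ((-(mink p q)) ^ 2 - 1)]

lemma mink_cont2 : Continuous fun q : V × V => mink q.1 q.2 := by
  unfold mink; fun_prop

lemma mcross_cont2 : Continuous fun q : V × V => mcross q.1 q.2 := by
  have c0 : Continuous fun q : V × V => q.1 1 * q.2 2 - q.1 2 * q.2 1 := by fun_prop
  have c1 : Continuous fun q : V × V => q.1 2 * q.2 0 - q.1 0 * q.2 2 := by fun_prop
  have c2 : Continuous fun q : V × V => -(q.1 0 * q.2 1) + q.1 1 * q.2 0 := by fun_prop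
  apply continuous_pi
  intro i
  fin_cases i
  · exact c0
  · exact c1
  · exact c2

lemma abs_coord_le {p : V} (hp : p ∈ H2) : |p 0| ≤ p 2 ∧ |p 1| ≤ p 2 := by
  have hs := H2_sq hp
  have h2 := H2_pos hp
  constructor
  · apply abs_le.2
    constructor
    · nlinarith [sq_nonneg (p 0 + p 2), sq_nonneg (p 1)]
    · nlinarith [sq_nonneg (p 0 - p 2), sq_nonneg (p 1)]
  · apply abs_le.2
    constructor
    · nlinarith [sq_nonneg (p 1 + p 2), sq_nonneg (p 0)]
    · nlinarith [sq_nonneg (p 1 - p 2), sq_nonneg (p 0)]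

lemma H2_isClosed : IsClosed H2 := by
  have hset : H2 = {p : V | mink p p = -1} ∩ {p : V | 1 ≤ p 2} := by
    ext p
    constructor
    · intro hp
      exact ⟨hp.1, H2_ge_one hp⟩
    · rintro ⟨h1, h2⟩
      have h2' : (1:ℝ) ≤ p 2 := h2
      exact ⟨h1, by linarith⟩
  rw [hset]
  apply IsClosed.inter
  · exact isClosed_eq (mink_cont2.comp (continuous_id.prodMk continuous_id)) continuous_const
  · exact isClosed_le continuous_const (continuous_apply 2)

lemma K_compact (C : ℝ) : IsCompact {p : V | p ∈ H2 ∧ p 2 ≤ C} := by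
  apply IsCompact.of_isClosed_subset (isCompact_closedBall (0 : V) (max C 1))
  · exact H2_isClosed.inter (isClosed_le (continuous_apply 2) continuous_const)
  · intro p hp
    rw [mem_closedBall_zero_iff]
    have hb := abs_coord_le hp.1
    have h2 := H2_pos hp.1
    apply pi_norm_le_iff_of_nonneg (le_trans zero_le_one (le_max_right C 1)) |>.2
    intro i
    fin_cases i
    · show |p 0| ≤ max C 1
      exact le_trans hb.1 (le_trans hp.2 (le_max_left C 1))
    · show |p 1| ≤ max C 1
      exact le_trans hb.2 (le_trans hp.2 (le_max_left C 1))
    · show |p 2| ≤ max C 1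
      rw [abs_of_pos h2]
      exact le_trans hp.2 (le_max_left C 1)

end MainAux

/-- Proposition 6.2.(2): a `(j,u)`-equivariant vector field with negative
lipschitz constant yields an equivariant fibration `ϖ` of Minkowski space over `ℍ²` by timelike
geodesic lines, and in particular the affine action of `Γ` on `ℝ³` is properly discontinuous. -/
theorem statement3 {Γ : Type*} [Group Γ] (j : Γ →* GL3) (hG0 : ∀ γ : Γ, InG0 (j γ))
    (hpd : ProperlyDiscOn (fun (γ : Γ) (p : V) => j γ p) H2)
    (u : Γ → V) (hu : IsCocycle j u)
    (X : V → V) (hX : IsVectorField X) (heq : EquivVF j u X)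
    (k : ℝ) (hk : k < 0) (hlip : LipschitzVF k X) :
    ∃ ϖ : V → V,
      (∀ v : V, ϖ v ∈ H2 ∧ mcross v (ϖ v) = X (ϖ v) ∧
        ∀ p ∈ H2, mcross v p = X p → p = ϖ v) ∧
      (Continuous ϖ ∧ ∀ p ∈ H2, ∃ v : V, ϖ v = p) ∧
      (∀ (γ : Γ) (v : V), ϖ (j γ v + u γ) = j γ (ϖ v)) ∧
      ProperlyDiscOn (fun (γ : Γ) (v : V) => j γ v + u γ) Set.univ := by
  classical
  have hκ : (0:ℝ) < -k := by linarith
  have hXc := hX.1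
  have hXt := hX.2
  have hmonoX : ∀ p ∈ H2, ∀ q ∈ H2, p ≠ q →
      (-k) * hdist p q * Real.sqrt ((mink p q) ^ 2 - 1) ≤ mink (X p) q + mink p (X q) := by
    intro p hp q hq hne
    have hd := hlip p hp q hq hne
    rw [dprime_formula hp hq hne (hXt p hp) (hXt q hq)] at hd
    have hsp : 0 < Real.sqrt ((mink p q) ^ 2 - 1) :=
      Real.sqrt_pos.2 (by nlinarith [mink_lt_neg_one hp hq hne])
    rw [div_le_iff₀ hsp] at hd
    nlinarith [hd]
  have hYt : ∀ v : V, ∀ p ∈ H2, mink (X p - mcross v p) p = 0 := by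
    intro v p hp
    rw [mink_sub_left, hXt p hp, mink_cross_tangent]; ring
  have hYmono : ∀ v : V, ∀ p ∈ H2, ∀ q ∈ H2, p ≠ q →
      (-k) * hdist p q * Real.sqrt ((mink p q) ^ 2 - 1)
        ≤ mink (X p - mcross v p) q + mink p (X q - mcross v q) := by
    intro v p hp q hq hne
    have h1 := hmonoX p hp q hq hne
    have h2 := mink_cross_skew v p q
    have e1 : mink (X p - mcross v p) q = mink (X p) q - mink (mcross v p) q :=
      mink_sub_left _ _ _
    have e2 : mink p (X q - mcross v q) = mink p (X q) - mink p (mcross v q) := by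
      rw [mink_comm, mink_sub_left, mink_comm (X q) p, mink_comm (mcross v q) p]
    rw [e1, e2]
    linarith [h1, h2]
  have hYcont : ∀ v : V, ContinuousOn (fun p => X p - mcross v p) H2 := by
    intro v
    have hcc : Continuous fun p : V => mcross v p :=
      mcross_cont2.comp (continuous_const.prodMk continuous_id)
    exact hXc.sub hcc.continuousOn
  have hexu : ∀ v : V, ∃ p : V, (p ∈ H2 ∧ mcross v p = X p) ∧
      ∀ q ∈ H2, mcross v q = X q → q = p := by
    intro v
    obtain ⟨p, hp, hzero⟩ := exists_zero_of_monotone (fun p => X p - mcross v p)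
      (hYcont v) (hYt v) (-k) hκ (hYmono v)
    have hpe : mcross v p = X p := (sub_eq_zero.1 hzero).symm
    refine ⟨p, ⟨hp, hpe⟩, ?_⟩
    intro q hq hqe
    by_contra hne
    have h := hYmono v q hq p hp hne
    have hq0 : X q - mcross v q = 0 := sub_eq_zero.2 hqe.symm
    have hp0 : X p - mcross v p = 0 := sub_eq_zero.2 hpe.symm
    rw [hq0, hp0, mink_zero_left, mink_comm q 0, mink_zero_left] at h
    have hdp := hdist_pos hq hp hne
    have hsp : 0 < Real.sqrt ((mink q p) ^ 2 - 1) :=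
      Real.sqrt_pos.2 (by nlinarith [mink_lt_neg_one hq hp hne])
    nlinarith [h, mul_pos (mul_pos hκ hdp) hsp]
  choose ϖ hϖ using hexu
  have hϖmem : ∀ v, ϖ v ∈ H2 := fun v => (hϖ v).1.1
  have hϖeq : ∀ v, mcross v (ϖ v) = X (ϖ v) := fun v => (hϖ v).1.2
  have hϖuniq : ∀ v, ∀ q ∈ H2, mcross v q = X q → q = ϖ v := fun v => (hϖ v).2
  -- continuity
  have hRc : Continuous fun v : V => mnorm (X oH - mcross v oH) / (-k) := by
    apply Continuous.div_const
    unfold mnorm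
    apply Real.continuous_sqrt.comp
    have hcm : Continuous fun v : V => mcross v oH := by
      have h := mcross_cont2.comp
        ((continuous_id.prodMk (continuous_const : Continuous fun _ : V => oH)) :
          Continuous fun v : V => (v, oH))
      exact h
    have hc1 : Continuous fun v : V => X oH - mcross v oH := continuous_const.sub hcm
    exact mink_cont2.comp (hc1.prodMk hc1)
  have hbound : ∀ v : V, (ϖ v) 2 ≤ Real.exp (mnorm (X oH - mcross v oH) / (-k)) := by
    intro v
    set R : ℝ := mnorm (X oH - mcross v oH) / (-k) with hR
    have hRnn : 0 ≤ R := by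
      rw [hR]
      exact div_nonneg (Real.sqrt_nonneg _) (le_of_lt hκ)
    rcases eq_or_ne (ϖ v) oH with hpo | hpo
    · rw [hpo]
      show oH 2 ≤ _
      have : oH 2 = 1 := by unfold oH; simp
      rw [this]
      calc (1:ℝ) = Real.exp 0 := Real.exp_zero.symm
      _ ≤ Real.exp R := Real.exp_le_exp.2 hRnn
    · set p := ϖ v with hpdef
      have hp := hϖmem v
      have h := hYmono v p hp oH oH_mem hpo
      have hp0 : X p - mcross v p = 0 := sub_eq_zero.2 (hϖeq v).symm
      rw [hp0, mink_zero_left, zero_add] at h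
      have hs : Real.sqrt ((mink p oH) ^ 2 - 1) = Real.sqrt ((mink p oH) ^ 2 - 1) := rfl
      have hsp : 0 < Real.sqrt ((mink p oH) ^ 2 - 1) :=
        Real.sqrt_pos.2 (by nlinarith [mink_lt_neg_one hp oH_mem hpo])
      have hb2 : mink p (X oH - mcross v oH) ≤ mnorm (X oH - mcross v oH)
          * Real.sqrt ((mink p oH) ^ 2 - 1) := by
        rw [mink_comm]
        exact tangent_bound hp oH_mem (hYt v oH oH_mem)
      have hd : (-k) * hdist p oH ≤ mnorm (X oH - mcross v oH) := by
        have := le_trans h hb2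
        have h3 : (-k) * hdist p oH * Real.sqrt ((mink p oH) ^ 2 - 1)
            ≤ mnorm (X oH - mcross v oH) * Real.sqrt ((mink p oH) ^ 2 - 1) := by
          linarith [this]
        exact le_of_mul_le_mul_right h3 hsp
      have hdR : hdist p oH ≤ R := by
        rw [hR, le_div_iff₀ hκ]
        linarith [hd]
      have hlog : Real.log (p 2) ≤ R := by
        have h1 : hdist p oH = acosh (p 2) := by
          unfold hdist
          rw [mink_o, neg_neg]
        calc Real.log (p 2) ≤ acosh (p 2) := acosh_ge_log (H2_ge_one hp)
        _ = hdist p oH := h1.symm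
        _ ≤ R := hdR
      exact (Real.log_le_iff_le_exp (H2_pos hp)).1 hlog
  have hcont : Continuous ϖ := by
    rw [continuous_iff_seqContinuous]
    intro vs v hvs
    apply Filter.tendsto_of_subseq_tendsto
    intro ns hns
    have hRtend : Filter.Tendsto (fun n => mnorm (X oH - mcross (vs (ns n)) oH) / (-k)) Filter.atTop
        (nhds (mnorm (X oH - mcross v oH) / (-k))) :=
      (hRc.tendsto v).comp (hvs.comp hns)
    obtain ⟨C, hC⟩ := hRtend.bddAbove_range
    have hmem : ∀ n, ϖ (vs (ns n)) ∈ {p : V | p ∈ H2 ∧ p 2 ≤ Real.exp C} := by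
      intro n
      refine ⟨hϖmem _, ?_⟩
      calc (ϖ (vs (ns n))) 2 ≤ Real.exp (mnorm (X oH - mcross (vs (ns n)) oH) / (-k)) :=
            hbound _
      _ ≤ Real.exp C := Real.exp_le_exp.2 (hC (Set.mem_range_self n))
    obtain ⟨a, haK, φ, hφmono, hφtend⟩ := (K_compact (Real.exp C)).tendsto_subseq hmem
    refine ⟨φ, ?_⟩
    have haH2 : a ∈ H2 := haK.1
    have hwtend : Filter.Tendsto (fun n => vs (ns (φ n))) Filter.atTop (nhds v) :=
      hvs.comp (hns.comp hφmono.tendsto_atTop)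
    have h1 : Filter.Tendsto (fun n => mcross (vs (ns (φ n))) (ϖ (vs (ns (φ n))))) Filter.atTop
        (nhds (mcross v a)) :=
      (mcross_cont2.tendsto (v, a)).comp (hwtend.prodMk_nhds hφtend)
    have h2 : Filter.Tendsto (fun n => X (ϖ (vs (ns (φ n))))) Filter.atTop (nhds (X a)) := by
      apply (hXc a haH2).tendsto.comp
      rw [tendsto_nhdsWithin_iff]
      exact ⟨hφtend, Filter.Eventually.of_forall fun n => hϖmem _⟩
    have heqn : (fun n => mcross (vs (ns (φ n))) (ϖ (vs (ns (φ n)))))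
        = fun n => X (ϖ (vs (ns (φ n)))) := by
      funext n; exact hϖeq _
    rw [heqn] at h1
    have hlim : mcross v a = X a := tendsto_nhds_unique h1 h2
    have : a = ϖ v := hϖuniq v a haH2 hlim
    rw [this] at hφtend
    exact hφtend
  -- equivariance
  have hequiv : ∀ (γ : Γ) (v : V), ϖ (j γ v + u γ) = j γ (ϖ v) := by
    intro γ v
    set p := ϖ v with hpdef
    have hp := hϖmem v
    have hq : (j γ) p ∈ H2 := (hG0 γ).2.2 p hp
    have hkey : mcross (j γ v + u γ) ((j γ) p) = X ((j γ) p) := by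
      rw [mcross_add_left]
      rw [g_cross (hG0 γ) v p]
      rw [hϖeq v]
      exact (heq γ p hp).symm
    exact (hϖuniq (j γ v + u γ) ((j γ) p) hq hkey).symm
  refine ⟨ϖ, fun v => ⟨hϖmem v, hϖeq v, hϖuniq v⟩, ⟨hcont, ?_⟩, hequiv, ?_⟩
  · -- surjectivity
    intro p hp
    refine ⟨mcross p (X p), ?_⟩
    exact (hϖuniq (mcross p (X p)) p hp (mcross_double hp (hXt p hp))).symm
  · -- proper discontinuity
    intro K L _ _ hKc hLc
    have hKH : ϖ '' K ⊆ H2 := by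
      rintro _ ⟨v, _, rfl⟩
      exact hϖmem v
    have hLH : ϖ '' L ⊆ H2 := by
      rintro _ ⟨v, _, rfl⟩
      exact hϖmem v
    apply Set.Finite.subset (hpd (ϖ '' K) (ϖ '' L) hKH hLH (hKc.image hcont) (hLc.image hcont))
    intro γ hγ
    obtain ⟨w, ⟨vv, hvK, rfl⟩, hwL⟩ := hγ
    refine ⟨ϖ (j γ vv + u γ), ⟨⟨ϖ vv, ⟨vv, hvK, rfl⟩, (hequiv γ vv).symm⟩, ?_⟩⟩
    exact ⟨j γ vv + u γ, hwL, rfl⟩
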